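/- Let L = 3 + 2√2 and for c ∈ (0,1] define M(c) := (cL+1)/(cL−1) (assuming cL > 1). Then M(c) + √(M(c)² − 1) ≥ (√2 + 1)(1 + (1−c)/2). -/

import Mathlib

/-- For `L = 3+2√2` and `c ∈ (0,1]` with `cL > 1`, setting `M(c) = (cL+1)/(cL-1)`,
one has `M(c) + √(M(c)²-1) ≥ (√2+1)(1+(1-c)/2)`. -/
theorem bernstein_parameter_lower_bound (c : ℝ) (hc₀ : 0 < c) (hc₁ : c ≤ 1)
    (hcL : 1 < c * (3 + 2 * Real.sqrt 2)) :
    (Real.sqrt 2 + 1) * (1 + (1 - c) / 2) ≤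
      (c * (3 + 2 * Real.sqrt 2) + 1) / (c * (3 + 2 * Real.sqrt 2) - 1) +
        Real.sqrt (((c * (3 + 2 * Real.sqrt 2) + 1) /
          (c * (3 + 2 * Real.sqrt 2) - 1)) ^ 2 - 1) := by
  set s := Real.sqrt 2 with hs
  have hs2 : s ^ 2 = 2 := Real.sq_sqrt (by norm_num)
  have hs0 : (1:ℝ) < s := by
    nlinarith [Real.sqrt_nonneg 2]
  set t := c * (3 + 2 * s) with ht
  have ht1 : 1 < t := hcL
  set u := Real.sqrt t with hu
  have hu2 : u ^ 2 = t := Real.sq_sqrt (by linarith)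
  have hu1 : 1 < u := by
    nlinarith [Real.sqrt_nonneg t]
  have huS : u ≤ 1 + s := by
    have : t ≤ (1 + s) ^ 2 := by nlinarith
    calc u ≤ Real.sqrt ((1+s)^2) := Real.sqrt_le_sqrt this
      _ = 1 + s := Real.sqrt_sq (by linarith)
  have htne : t - 1 ≠ 0 := by linarith
  have hsqrt : Real.sqrt (((t + 1) / (t - 1)) ^ 2 - 1) = 2 * u / (t - 1) := by
    have h1 : ((t + 1) / (t - 1)) ^ 2 - 1 = (2 * u / (t - 1)) ^ 2 := by
      field_simp
      nlinarith [hu2]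
    rw [h1, Real.sqrt_sq (div_nonneg (by positivity) (by linarith))]
  rw [hsqrt]
  have h2 : (t + 1) / (t - 1) + 2 * u / (t - 1) = (u + 1) / (u - 1) := by
    rw [← add_div]
    rw [div_eq_div_iff htne (by linarith)]
    nlinarith [hu2]
  rw [h2]
  rw [le_div_iff₀ (by linarith)]
  nlinarith [mul_nonneg (sq_nonneg (u - (1 + s))) (by linarith : (0:ℝ) ≤ u + 1 + 2*s), hu2, hs2]
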